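/- There exists a finite solvable group that is a just non-Dedekind (JND) group but not a just nonabelian (JNA) group. (One such group is the semidirect product of an elementary abelian group of order 9 by the quaternion group Q8 of order 8 acting faithfully and irreducibly.) -/

import Mathlib

/-- A group is Dedekind if every subgroup of it is normal. -/
def IsDedekind (G : Type*) [Group G] : Prop := ∀ H : Subgroup G, H.Normal

/-- A group is just non-Dedekind (JND) if it is not Dedekind but every quotient
by a nontrivial normal subgroup is Dedekind. -/
def IsJND (G : Type*) [Group G] : Prop :=
  ¬ IsDedekind G ∧
    ∀ (N : Subgroup G) (hN : N.Normal), N ≠ ⊥ →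
      letI := hN
      IsDedekind (G ⧸ N)

/-- A group is just nonabelian (JNA) if it is nonabelian but every quotient
by a nontrivial normal subgroup is abelian. -/
def IsJNA (G : Type*) [Group G] : Prop :=
  (∃ a b : G, a * b ≠ b * a) ∧
    ∀ (N : Subgroup G) (hN : N.Normal), N ≠ ⊥ →
      letI := hN
      ∀ x y : G ⧸ N, x * y = y * x

section JNDExample


structure Q8T where
  s : Bool
  b : Fin 4
deriving DecidableEq, Fintype

namespace Q8T

/-- basis multiplication table on {1,i,j,k}; result sign and basis. -/
def btab : Fin 4 → Fin 4 → Bool × Fin 4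
  | ⟨0,_⟩, y => (false, y)
  | x, ⟨0,_⟩ => (false, x)
  | ⟨1,_⟩, ⟨1,_⟩ => (true, 0)
  | ⟨1,_⟩, ⟨2,_⟩ => (false, 3)
  | ⟨1,_⟩, ⟨3,_⟩ => (true, 2)
  | ⟨2,_⟩, ⟨1,_⟩ => (true, 3)
  | ⟨2,_⟩, ⟨2,_⟩ => (true, 0)
  | ⟨2,_⟩, ⟨3,_⟩ => (false, 1)
  | ⟨3,_⟩, ⟨1,_⟩ => (false, 2)
  | ⟨3,_⟩, ⟨2,_⟩ => (true, 1)
  | ⟨3,_⟩, ⟨3,_⟩ => (true, 0)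
  | _, _ => (false, 0)

def qmul (x y : Q8T) : Q8T :=
  ⟨xor x.s (xor y.s (btab x.b y.b).1), (btab x.b y.b).2⟩

def qinv (x : Q8T) : Q8T := ⟨if x.b = 0 then x.s else !x.s, x.b⟩

instance : One Q8T := ⟨⟨false, 0⟩⟩
instance : Mul Q8T := ⟨qmul⟩
instance : Inv Q8T := ⟨qinv⟩

instance : Group Q8T where
  mul_assoc := by decide
  one_mul := by decide
  mul_one := by decide
  inv_mul_cancel := by decide

end Q8T

abbrev V2 := ZMod 3 × ZMod 3

/-- matrix action of the quaternion basis elements on (Z/3)². -/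
def bact : Fin 4 → V2 → V2
  | ⟨0,_⟩, v => v
  | ⟨1,_⟩, v => (-v.2, v.1)
  | ⟨2,_⟩, v => (v.1 + v.2, v.1 - v.2)
  | ⟨3,_⟩, v => (v.2 - v.1, v.1 + v.2)
  | _, v => v

def act (q : Q8T) (v : V2) : V2 := if q.s then -(bact q.b v) else bact q.b v

theorem act_mul : ∀ (a b : Q8T) (v : V2), act (a * b) v = act a (act b v) := by decide
theorem act_one : ∀ v : V2, act 1 v = v := by decide
theorem act_add : ∀ (a : Q8T) (v w : V2), act a (v + w) = act a v + act a w := by decide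
theorem act_zero : ∀ a : Q8T, act a 0 = 0 := by decide

structure GT where
  v : V2
  q : Q8T
deriving DecidableEq, Fintype

namespace GT

@[ext] theorem ext' {x y : GT} (h1 : x.v = y.v) (h2 : x.q = y.q) : x = y := by
  cases x; cases y; simp_all

instance : One GT := ⟨⟨0, 1⟩⟩
instance : Mul GT := ⟨fun x y => ⟨x.v + act x.q y.v, x.q * y.q⟩⟩
instance : Inv GT := ⟨fun x => ⟨act x.q⁻¹ (-x.v), x.q⁻¹⟩⟩

theorem mul_def (x y : GT) : x * y = ⟨x.v + act x.q y.v, x.q * y.q⟩ := rfl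
theorem one_def : (1 : GT) = ⟨0, 1⟩ := rfl
theorem inv_def (x : GT) : x⁻¹ = ⟨act x.q⁻¹ (-x.v), x.q⁻¹⟩ := rfl

instance : Group GT where
  mul_assoc x y z := by
    refine ext' ?_ (mul_assoc x.q y.q z.q)
    show (x.v + act x.q y.v) + act (x.q * y.q) z.v = x.v + act x.q (y.v + act y.q z.v)
    rw [act_mul, act_add, add_assoc]
  one_mul x := by
    refine ext' ?_ (one_mul x.q)
    show (0 : V2) + act 1 x.v = x.v
    rw [act_one, zero_add]
  mul_one x := by
    refine ext' ?_ (mul_one x.q)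
    show x.v + act x.q 0 = x.v
    rw [act_zero, add_zero]
  inv_mul_cancel x := by
    refine ext' ?_ (inv_mul_cancel x.q)
    show act x.q⁻¹ (-x.v) + act x.q⁻¹ x.v = 0
    rw [← act_add, neg_add_cancel, act_zero]

end GT

/-- The elementary abelian normal subgroup of order 9. -/
def Vsub : Subgroup GT where
  carrier := {x | x.q = 1}
  mul_mem' := by
    intro a b ha hb
    show (a * b).q = 1
    show a.q * b.q = 1
    rw [Set.mem_setOf_eq] at ha hb
    rw [ha, hb, mul_one]
  one_mem' := rfl
  inv_mem' := by
    intro a ha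
    show a.q⁻¹ = 1
    rw [Set.mem_setOf_eq] at ha
    rw [ha, inv_one]

theorem mem_Vsub {x : GT} : x ∈ Vsub ↔ x.q = 1 := Iff.rfl

-- small decidable facts
set_option maxHeartbeats 3200000 in
theorem conj0 : ∀ (a : Q8T) (u : V2),
    (⟨0, a⟩ : GT) * ⟨u, 1⟩ * (⟨0, a⟩ : GT)⁻¹ = ⟨act a u, 1⟩ := by decide

set_option maxHeartbeats 3200000 in
theorem comm0 : ∀ x : GT,
    x * ⟨(1,0), 1⟩ * x⁻¹ * (⟨(1,0), 1⟩ : GT)⁻¹ = ⟨act x.q (1,0) - (1,0), 1⟩ := by decide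

theorem nonfix : ∀ a : Q8T, a ≠ 1 → act a (1,0) - (1,0) ≠ 0 := by decide

theorem orbit_trans : ∀ u w : V2, u ≠ 0 → w ≠ 0 → ∃ a : Q8T, act a u = w := by decide

set_option maxHeartbeats 3200000 in
theorem q8_conj_pow : ∀ a b : Q8T, ∃ k : Fin 4, a * b * a⁻¹ = b ^ (k : ℕ) := by decide

theorem pow0 (b : Q8T) : ∀ n : ℕ, (⟨0, b⟩ : GT) ^ n = ⟨0, b ^ n⟩ := by
  intro n
  induction n with
  | zero => rfl
  | succ n ih =>
    rw [pow_succ, pow_succ, ih, GT.mul_def]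
    exact GT.ext' (by rw [act_zero, add_zero]) rfl


/-- Every nontrivial normal subgroup contains Vsub. -/
theorem lemA (N : Subgroup GT) (hN : N.Normal) (hne : N ≠ ⊥) : Vsub ≤ N := by
  obtain ⟨⟨x, hxN⟩, hx1⟩ := Subgroup.ne_bot_iff_exists_ne_one.mp hne
  have hx1 : x ≠ 1 := fun h => hx1 (Subtype.ext h)
  have step1 : ∃ u : V2, u ≠ 0 ∧ (⟨u, 1⟩ : GT) ∈ N := by
    by_cases hq : x.q = 1
    · exact ⟨x.v, fun h => hx1 (GT.ext' h hq),
        by have hx : x = ⟨x.v, 1⟩ := GT.ext' rfl hq; rwa [← hx]⟩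
    · refine ⟨act x.q (1,0) - (1,0), nonfix x.q hq, ?_⟩
      have h1 : (⟨(1,0),1⟩ : GT) * x⁻¹ * (⟨(1,0),1⟩ : GT)⁻¹ ∈ N :=
        hN.conj_mem x⁻¹ (N.inv_mem hxN) _
      have h2 : x * ((⟨(1,0),1⟩ : GT) * x⁻¹ * (⟨(1,0),1⟩ : GT)⁻¹) ∈ N := N.mul_mem hxN h1
      have heq : x * ((⟨(1,0),1⟩ : GT) * x⁻¹ * (⟨(1,0),1⟩ : GT)⁻¹)
          = x * ⟨(1,0),1⟩ * x⁻¹ * (⟨(1,0),1⟩ : GT)⁻¹ := by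
        rw [← mul_assoc, ← mul_assoc]
      rw [heq, comm0 x] at h2
      exact h2
  obtain ⟨u, hu0, huN⟩ := step1
  intro y hy
  have hyq : y.q = 1 := hy
  by_cases hyv : y.v = 0
  · have : y = 1 := GT.ext' hyv hyq
    rw [this]; exact N.one_mem
  · obtain ⟨a, ha⟩ := orbit_trans u y.v hu0 hyv
    have hc := hN.conj_mem _ huN ⟨0, a⟩
    rw [conj0, ha] at hc
    have hy' : y = ⟨y.v, 1⟩ := GT.ext' rfl hyq
    rwa [← hy'] at hc

/-- Every subgroup containing Vsub is normal. -/
theorem lemB (H : Subgroup GT) (hVH : Vsub ≤ H) : H.Normal := by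
  constructor
  intro h hh g
  have hb : (⟨0, h.q⟩ : GT) ∈ H := by
    have h1 : (⟨-h.v, 1⟩ : GT) ∈ H := hVH rfl
    have heq : (⟨-h.v, 1⟩ : GT) * h = ⟨0, h.q⟩ := by
      rw [GT.mul_def]
      exact GT.ext' (by rw [act_one, neg_add_cancel]) (one_mul _)
    have := H.mul_mem h1 hh
    rwa [heq] at this
  obtain ⟨k, hk⟩ := q8_conj_pow g.q h.q
  have heq : (⟨(g*h*g⁻¹).v, 1⟩ : GT) * (⟨0, h.q⟩ : GT) ^ (k:ℕ) = g*h*g⁻¹ := by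
    rw [pow0, GT.mul_def]
    refine GT.ext' ?_ ?_
    · show (g*h*g⁻¹).v + act 1 0 = (g*h*g⁻¹).v
      rw [act_zero, add_zero]
    · show 1 * h.q ^ (k:ℕ) = (g*h*g⁻¹).q
      rw [one_mul, ← hk]; rfl
  rw [← heq]
  exact H.mul_mem (hVH rfl) (H.pow_mem hb _)

/-- A non-normal subgroup witness container. -/
def Ksub : Subgroup GT where
  carrier := {x | x.v.2 = 0 ∧ x.q = 1}
  mul_mem' := by
    rintro a b ⟨ha2, haq⟩ ⟨hb2, hbq⟩
    constructor
    · show (a.v + act a.q b.v).2 = 0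
      rw [haq, act_one]
      show a.v.2 + b.v.2 = 0
      rw [ha2, hb2, add_zero]
    · show a.q * b.q = 1
      rw [haq, hbq, one_mul]
  one_mem' := ⟨rfl, rfl⟩
  inv_mem' := by
    rintro a ⟨ha2, haq⟩
    constructor
    · show (act a.q⁻¹ (-a.v)).2 = 0
      rw [haq, inv_one, act_one]
      show -a.v.2 = 0
      rw [ha2, neg_zero]
    · show a.q⁻¹ = 1
      rw [haq, inv_one]

theorem notDedekind : ¬ IsDedekind GT := by
  intro hD
  have hnorm := hD (Subgroup.zpowers (⟨(1,0), 1⟩ : GT))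
  have hg : (⟨(1,0),1⟩ : GT) ∈ Subgroup.zpowers (⟨(1,0), 1⟩ : GT) := Subgroup.mem_zpowers _
  have hc := hnorm.conj_mem _ hg (⟨0, ⟨false, 1⟩⟩ : GT)
  rw [conj0] at hc
  have hle : Subgroup.zpowers (⟨(1,0),1⟩ : GT) ≤ Ksub := Subgroup.zpowers_le.mpr ⟨rfl, rfl⟩
  have h2 := hle hc
  exact absurd h2.1 (by decide)

theorem dedekind_quot (N : Subgroup GT) (hN : N.Normal) (hne : N ≠ ⊥) :
    IsDedekind (GT ⧸ N) := by
  intro Q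
  have hVN : Vsub ≤ N := lemA N hN hne
  have hcomap : (Q.comap (QuotientGroup.mk' N)).Normal := by
    apply lemB
    refine le_trans hVN ?_
    conv_lhs => rw [← QuotientGroup.ker_mk' N]
    exact Subgroup.ker_le_comap (f := QuotientGroup.mk' N) Q
  have hmap := hcomap.map (QuotientGroup.mk' N) (QuotientGroup.mk'_surjective N)
  rwa [Subgroup.map_comap_eq_self_of_surjective (QuotientGroup.mk'_surjective N)] at hmap

def piQ : GT →* Q8T where
  toFun := GT.q
  map_one' := rfl
  map_mul' := fun _ _ => rfl

def tau : Q8T →* Multiplicative (ZMod 2 × ZMod 2) where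
  toFun := fun q => Multiplicative.ofAdd
    ((if q.b = 1 ∨ q.b = 3 then 1 else 0 : ZMod 2), (if q.b = 2 ∨ q.b = 3 then 1 else 0 : ZMod 2))
  map_one' := by decide
  map_mul' := by decide

def sigmaH : Multiplicative (ZMod 2) →* Q8T where
  toFun := fun x => if x.toAdd = 0 then 1 else ⟨true, 0⟩
  map_one' := by decide
  map_mul' := by decide

theorem solvQ8 : IsSolvable Q8T := by
  refine solvable_of_ker_le_range sigmaH tau ?_
  intro q hq
  rw [MonoidHom.mem_ker] at hq
  rw [MonoidHom.mem_range]
  revert hq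
  revert q
  decide

def iotaV : Multiplicative V2 →* GT where
  toFun := fun v => ⟨v.toAdd, 1⟩
  map_one' := rfl
  map_mul' := by decide

theorem solvGT : IsSolvable GT := by
  haveI : Group.IsSolvable Q8T := solvQ8
  refine solvable_of_ker_le_range iotaV piQ ?_
  intro x hx
  rw [MonoidHom.mem_ker] at hx
  exact ⟨Multiplicative.ofAdd x.v, GT.ext' rfl hx.symm⟩

theorem notJNA : ¬ IsJNA GT := by
  rintro ⟨-, h2⟩
  have hVnormal : Vsub.Normal := lemB Vsub le_rfl
  have hVne : Vsub ≠ ⊥ := by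
    intro h
    have hm : (⟨(1,0), 1⟩ : GT) ∈ Vsub := rfl
    rw [h, Subgroup.mem_bot] at hm
    exact absurd hm (by decide)
  have hcomm := h2 Vsub hVnormal hVne
    (QuotientGroup.mk (⟨0, ⟨false,1⟩⟩ : GT)) (QuotientGroup.mk (⟨0, ⟨false,2⟩⟩ : GT))
  rw [← QuotientGroup.mk_mul, ← QuotientGroup.mk_mul, QuotientGroup.eq] at hcomm
  have h3 : (((⟨0, ⟨false,1⟩⟩ : GT) * ⟨0, ⟨false,2⟩⟩)⁻¹ *
      ((⟨0, ⟨false,2⟩⟩ : GT) * ⟨0, ⟨false,1⟩⟩)).q = 1 := hcomm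
  exact absurd h3 (by decide)


end JNDExample

/-- There exists a finite solvable group which is JND but not JNA. -/
theorem exists_finite_solvable_jnd_not_jna :
    ∃ (G : Type) (_ : Group G), Finite G ∧ IsSolvable G ∧ IsJND G ∧ ¬ IsJNA G := by
  refine ⟨GT, inferInstance, Finite.of_fintype _, solvGT,
    ⟨notDedekind, fun N hN hne => dedekind_quot N hN hne⟩, notJNA⟩
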